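/- Let d ≥ 1 and let {S_i}_{i∈I} be a bounded family of matrices in Matrix d d ℂ indexed by a nonempty set I. Then for every ε > 0 there exists a norm N on ℂ^d such that the operator norm of S_i induced by N satisfies N_op(S_i) ≤ ρ̂(S) + ε for every i ∈ I. Consequently, ρ̂(S) = inf over all norms N on ℂ^d of sup_{i∈I} N_op(S_i). -/

import Mathlib

open Filter Topology MeasureTheory

/-- Operator norm on `d × d` complex matrices induced by the Euclidean norm on `ℂ^d`. -/
noncomputable def opNorm {d : ℕ} (A : Matrix (Fin d) (Fin d) ℂ) : ℝ :=
  ‖Matrix.toEuclideanCLM (𝕜 := ℂ) A‖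

/-- `prodS S x n = S_{i_n} ⋯ S_{i_1}` where `i_k = x (k-1)`. -/
noncomputable def prodS {d : ℕ} {I : Type*} (S : I → Matrix (Fin d) (Fin d) ℂ)
    (x : ℕ → I) : ℕ → Matrix (Fin d) (Fin d) ℂ
  | 0 => 1
  | n + 1 => S (x n) * prodS S x n

/-- `N` is a (vector) norm on `ℂ^d`. -/
def IsNorm {d : ℕ} (N : (Fin d → ℂ) → ℝ) : Prop :=
  (∀ x, 0 ≤ N x) ∧ (∀ x, N x = 0 ↔ x = 0) ∧
    (∀ (c : ℂ) (x), N (c • x) = ‖c‖ * N x) ∧ ∀ x y, N (x + y) ≤ N x + N y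

/-- The operator norm of a matrix induced by a vector norm `N` on `ℂ^d`. -/
noncomputable def inducedOpNorm {d : ℕ} (N : (Fin d → ℂ) → ℝ)
    (A : Matrix (Fin d) (Fin d) ℂ) : ℝ :=
  ⨆ x : {x : Fin d → ℂ // N x = 1}, N (A.mulVec x.1)


noncomputable def nuu {d : ℕ} (v : Fin d → ℂ) : ℝ :=
  ‖(WithLp.equiv 2 (Fin d → ℂ)).symm v‖

lemma nuu_nonneg {d : ℕ} (v : Fin d → ℂ) : 0 ≤ nuu v := norm_nonneg _

lemma nuu_eq_zero {d : ℕ} (v : Fin d → ℂ) : nuu v = 0 ↔ v = 0 := by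
  rw [nuu, norm_eq_zero]
  constructor
  · intro h; simpa using congrArg (WithLp.equiv 2 (Fin d → ℂ)) h
  · rintro rfl; simp

lemma nuu_smul {d : ℕ} (c : ℂ) (v : Fin d → ℂ) : nuu (c • v) = ‖c‖ * nuu v := by
  rw [nuu, nuu]
  rw [show (WithLp.equiv 2 (Fin d → ℂ)).symm (c • v) = c • (WithLp.equiv 2 (Fin d → ℂ)).symm v from rfl]
  exact norm_smul c _

lemma nuu_add {d : ℕ} (v w : Fin d → ℂ) : nuu (v + w) ≤ nuu v + nuu w := by
  exact norm_add_le ((WithLp.equiv 2 (Fin d → ℂ)).symm v) ((WithLp.equiv 2 (Fin d → ℂ)).symm w)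

lemma nuu_mulVec {d : ℕ} (A : Matrix (Fin d) (Fin d) ℂ) (v : Fin d → ℂ) :
    nuu (A.mulVec v) ≤ opNorm A * nuu v := by
  have h := Matrix.toEuclideanCLM_toLp (𝕜 := ℂ) A v
  have h2 : nuu (A.mulVec v) = ‖Matrix.toEuclideanCLM (𝕜 := ℂ) A ((WithLp.equiv 2 (Fin d → ℂ)).symm v)‖ := by
    rfl
  rw [h2]
  exact (Matrix.toEuclideanCLM (𝕜 := ℂ) A).le_opNorm _

lemma opNorm_nonneg' {d : ℕ} (A : Matrix (Fin d) (Fin d) ℂ) : 0 ≤ opNorm A := norm_nonneg _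

lemma opNorm_mul_le' {d : ℕ} (A B : Matrix (Fin d) (Fin d) ℂ) :
    opNorm (A * B) ≤ opNorm A * opNorm B := by
  rw [opNorm, map_mul]
  exact norm_mul_le _ _

lemma opNorm_one' {d : ℕ} (hd : 1 ≤ d) : opNorm (1 : Matrix (Fin d) (Fin d) ℂ) = 1 := by
  rw [opNorm, map_one]
  have : Nontrivial (EuclideanSpace ℂ (Fin d)) := by
    haveI : Nonempty (Fin d) := ⟨⟨0, hd⟩⟩
    infer_instance
  exact norm_one

variable {d : ℕ} {N : (Fin d → ℂ) → ℝ}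

lemma coord_le_nuu (v : Fin d → ℂ) (i : Fin d) : ‖v i‖ ≤ nuu v := by
  rw [nuu, EuclideanSpace.norm_eq]
  have h1 : ‖v i‖ ^ 2 ≤ ∑ j : Fin d, ‖(WithLp.equiv 2 (Fin d → ℂ)).symm v j‖ ^ 2 := by
    have : ((WithLp.equiv 2 (Fin d → ℂ)).symm v) i = v i := rfl
    rw [← this]
    exact Finset.single_le_sum (f := fun j => ‖(WithLp.equiv 2 (Fin d → ℂ)).symm v j‖ ^ 2) (fun j _ => sq_nonneg _) (Finset.mem_univ i)
  calc ‖v i‖ = √(‖v i‖ ^ 2) := by rw [Real.sqrt_sq (norm_nonneg _)]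
    _ ≤ _ := Real.sqrt_le_sqrt h1

lemma IsNorm.zero (hN : IsNorm N) : N 0 = 0 := (hN.2.1 0).2 rfl

lemma IsNorm.sum_le (hN : IsNorm N) {ι : Type*} (s : Finset ι) (f : ι → Fin d → ℂ) :
    N (∑ i ∈ s, f i) ≤ ∑ i ∈ s, N (f i) := by
  classical
  induction s using Finset.induction_on with
  | empty => simp [hN.zero]
  | insert a s h ih =>
      rw [Finset.sum_insert h, Finset.sum_insert h]
      exact le_trans (hN.2.2.2 _ _) (by linarith)

lemma IsNorm.exists_upper (hN : IsNorm N) : ∃ Cu : ℝ, 0 < Cu ∧ ∀ v, N v ≤ Cu * nuu v := by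
  classical
  refine ⟨(∑ i : Fin d, N (fun j => if i = j then 1 else 0)) + 1, ?_, ?_⟩
  · have : ∀ i : Fin d, 0 ≤ N (fun j => if i = j then 1 else 0) := fun i => hN.1 _
    have h2 : (0:ℝ) ≤ ∑ i : Fin d, N (fun j => if i = j then 1 else 0) :=
      Finset.sum_nonneg (fun i _ => this i)
    linarith
  · intro v
    have hv : v = ∑ i : Fin d, v i • fun j => if i = j then (1:ℂ) else 0 := pi_eq_sum_univ v
    calc N v ≤ ∑ i : Fin d, N (v i • fun j => if i = j then (1:ℂ) else 0) := by
            conv_lhs => rw [hv]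
            exact hN.sum_le Finset.univ _
      _ = ∑ i : Fin d, ‖v i‖ * N (fun j => if i = j then (1:ℂ) else 0) := by
            simp [hN.2.2.1]
      _ ≤ ∑ i : Fin d, nuu v * N (fun j => if i = j then (1:ℂ) else 0) := by
            apply Finset.sum_le_sum
            intro i _
            exact mul_le_mul_of_nonneg_right (coord_le_nuu v i) (hN.1 _)
      _ = (∑ i : Fin d, N (fun j => if i = j then (1:ℂ) else 0)) * nuu v := by
            rw [Finset.sum_mul]
            exact Finset.sum_congr rfl (fun i _ => mul_comm _ _)
      _ ≤ _ := by
            have := norm_nonneg ((WithLp.equiv 2 (Fin d → ℂ)).symm v)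
            rw [nuu]; nlinarith

lemma IsNorm.sub_rev (hN : IsNorm N) (x y : Fin d → ℂ) : N (x - y) = N (y - x) := by
  have h := hN.2.2.1 (-1) (y - x)
  simp only [neg_smul, one_smul, norm_neg, norm_one, one_mul] at h
  rw [← h]; ring_nf

lemma IsNorm.exists_lower (hd : 1 ≤ d) (hN : IsNorm N) :
    ∃ cl : ℝ, 0 < cl ∧ ∀ v, cl * nuu v ≤ N v := by
  obtain ⟨Cu, hCu, hCuB⟩ := hN.exists_upper
  haveI : Nonempty (Fin d) := ⟨⟨0, hd⟩⟩
  set e := WithLp.equiv 2 (Fin d → ℂ) with he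
  set M : EuclideanSpace ℂ (Fin d) → ℝ := fun y => N (e y) with hM
  have hnuue : ∀ z : EuclideanSpace ℂ (Fin d), nuu (e z) = ‖z‖ := by
    intro z; rw [nuu]; rw [e.symm_apply_apply z]
  have key : ∀ a b : EuclideanSpace ℂ (Fin d), M a - M b ≤ Cu * ‖a - b‖ := by
    intro a b
    have h1 : N (e a) ≤ N (e a - e b) + N (e b) := by
      have h := hN.2.2.2 (e a - e b) (e b)
      simpa using h
    have h2 : e a - e b = e (a - b) := rfl
    have h3 : N (e (a - b)) ≤ Cu * ‖a - b‖ := by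
      have := hCuB (e (a - b)); rwa [hnuue] at this
    simp only [hM]
    rw [h2] at h1
    linarith
  have hlip : LipschitzWith (Real.toNNReal Cu) M := by
    apply LipschitzWith.of_dist_le_mul
    intro x y
    rw [Real.dist_eq, dist_eq_norm, Real.coe_toNNReal _ hCu.le, abs_sub_le_iff]
    exact ⟨key x y, by rw [norm_sub_rev]; exact key y x⟩
  have hsph : IsCompact (Metric.sphere (0 : EuclideanSpace ℂ (Fin d)) 1) :=
    isCompact_sphere _ _
  have hne : (Metric.sphere (0 : EuclideanSpace ℂ (Fin d)) 1).Nonempty :=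
    NormedSpace.sphere_nonempty.mpr zero_le_one
  obtain ⟨x0, hx0mem, hx0min⟩ := hsph.exists_isMinOn hne hlip.continuous.continuousOn
  replace hx0min : ∀ y ∈ Metric.sphere (0 : EuclideanSpace ℂ (Fin d)) 1, M x0 ≤ M y := fun y hy => hx0min hy
  have hx0 : ‖x0‖ = 1 := by simpa using hx0mem
  have hclpos : 0 < M x0 := by
    rcases (hN.1 (e x0)).lt_or_eq with h | h
    · exact h
    · exfalso
      have : e x0 = 0 := (hN.2.1 _).1 h.symm
      have hx00 : x0 = 0 := by
        have := congrArg e.symm this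
        simpa [show e.symm 0 = 0 from rfl] using this
      rw [hx00] at hx0; simp at hx0
  refine ⟨M x0, hclpos, ?_⟩
  intro v
  by_cases hv : v = 0
  · subst hv
    rw [hN.zero, show nuu (0 : Fin d → ℂ) = 0 from by simp [nuu], mul_zero]
  · set y := e.symm v with hy
    have hyne : y ≠ 0 := by
      intro h
      apply hv
      have := congrArg e h
      simpa [hy, show e 0 = 0 from rfl] using this
    have hynorm : (0:ℝ) < ‖y‖ := norm_pos_iff.mpr hyne
    set c : ℂ := ((‖y‖⁻¹ : ℝ) : ℂ) with hc
    have hcn : ‖c‖ = ‖y‖⁻¹ := by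
      rw [hc, Complex.norm_real, Real.norm_eq_abs, abs_of_pos (inv_pos.mpr hynorm)]
    have hmem : c • y ∈ Metric.sphere (0 : EuclideanSpace ℂ (Fin d)) 1 := by
      simp only [Metric.mem_sphere, dist_zero_right, norm_smul, hcn]
      field_simp
    have h5 : M x0 ≤ M (c • y) := hx0min _ hmem
    have h6 : M (c • y) = ‖y‖⁻¹ * N v := by
      have hsm : e (c • y) = c • e y := rfl
      have hey : e y = v := e.apply_symm_apply v
      simp only [hM, hsm, hey, hN.2.2.1, hcn]
    have h7 : nuu v = ‖y‖ := rfl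
    rw [h7]
    rw [h6] at h5
    rw [mul_comm]
    calc ‖y‖ * M x0 ≤ ‖y‖ * (‖y‖⁻¹ * N v) := by
          exact mul_le_mul_of_nonneg_left h5 hynorm.le
      _ = N v := by field_simp

lemma IsNorm.exists_unit (hd : 1 ≤ d) (hN : IsNorm N) : ∃ v, N v = 1 := by
  set v0 : Fin d → ℂ := fun _ => 1 with hv0def
  have hv0 : v0 ≠ 0 := by
    intro h
    have := congrFun h ⟨0, hd⟩
    simp [hv0def] at this
  have hpos : 0 < N v0 := by
    rcases (hN.1 v0).lt_or_eq with h | h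
    · exact h
    · exact absurd ((hN.2.1 v0).1 h.symm) hv0
  refine ⟨(((N v0)⁻¹ : ℝ) : ℂ) • v0, ?_⟩
  rw [hN.2.2.1, Complex.norm_real, Real.norm_eq_abs, abs_of_pos (inv_pos.mpr hpos)]
  field_simp



lemma induced_nonneg (hN : IsNorm N) (A : Matrix (Fin d) (Fin d) ℂ) :
    0 ≤ inducedOpNorm N A :=
  Real.iSup_nonneg fun x => hN.1 _

lemma induced_le (hd : 1 ≤ d) (hN : IsNorm N) {A : Matrix (Fin d) (Fin d) ℂ} {c : ℝ}
    (h : ∀ v, N v = 1 → N (A.mulVec v) ≤ c) : inducedOpNorm N A ≤ c := by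
  obtain ⟨v, hv⟩ := hN.exists_unit hd
  haveI : Nonempty {x : Fin d → ℂ // N x = 1} := ⟨⟨v, hv⟩⟩
  exact ciSup_le fun x => h x.1 x.2

lemma induced_bddAbove (hd : 1 ≤ d) (hN : IsNorm N) (A : Matrix (Fin d) (Fin d) ℂ) :
    BddAbove (Set.range fun x : {x : Fin d → ℂ // N x = 1} => N (A.mulVec x.1)) := by
  obtain ⟨Cu, hCu, hCuB⟩ := hN.exists_upper
  obtain ⟨cl, hcl, hclB⟩ := hN.exists_lower hd
  refine ⟨Cu * opNorm A * (1 / cl), ?_⟩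
  rintro r ⟨⟨x, hx⟩, rfl⟩
  have h1 : N (A.mulVec x) ≤ Cu * nuu (A.mulVec x) := hCuB _
  have h2 : nuu (A.mulVec x) ≤ opNorm A * nuu x := nuu_mulVec A x
  have h3 : nuu x ≤ 1 / cl := by
    have := hclB x
    rw [hx] at this
    rw [le_div_iff₀ hcl]
    linarith
  have h4 : (0:ℝ) ≤ opNorm A := opNorm_nonneg' A
  have h5 : (0:ℝ) ≤ nuu x := nuu_nonneg x
  calc N (A.mulVec x) ≤ Cu * (opNorm A * nuu x) := le_trans h1 (by nlinarith)
    _ ≤ Cu * opNorm A * (1 / cl) := by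
        rw [mul_assoc]
        exact mul_le_mul_of_nonneg_left (mul_le_mul_of_nonneg_left h3 h4) hCu.le

lemma mulVec_le_induced (hd : 1 ≤ d) (hN : IsNorm N) (A : Matrix (Fin d) (Fin d) ℂ)
    (v : Fin d → ℂ) : N (A.mulVec v) ≤ inducedOpNorm N A * N v := by
  by_cases hv : v = 0
  · subst hv
    rw [Matrix.mulVec_zero, hN.zero, mul_zero]
  · have hNv : 0 < N v := by
      rcases (hN.1 v).lt_or_eq with h | h
      · exact h
      · exact absurd ((hN.2.1 v).1 h.symm) hv
    set c : ℂ := (((N v)⁻¹ : ℝ) : ℂ) with hc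
    have hcn : ‖c‖ = (N v)⁻¹ := by
      rw [hc, Complex.norm_real, Real.norm_eq_abs, abs_of_pos (inv_pos.mpr hNv)]
    have hu : N (c • v) = 1 := by
      rw [hN.2.2.1, hcn]; field_simp
    have hle : N (A.mulVec (c • v)) ≤ inducedOpNorm N A :=
      le_ciSup (induced_bddAbove hd hN A) (⟨c • v, hu⟩ : {x : Fin d → ℂ // N x = 1})
    rw [Matrix.mulVec_smul, hN.2.2.1, hcn] at hle
    calc N (A.mulVec v) = ((N v)⁻¹ * N (A.mulVec v)) * N v := by field_simp
      _ ≤ inducedOpNorm N A * N v := mul_le_mul_of_nonneg_right hle hNv.le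

lemma induced_mul_le (hd : 1 ≤ d) (hN : IsNorm N) (A B : Matrix (Fin d) (Fin d) ℂ) :
    inducedOpNorm N (A * B) ≤ inducedOpNorm N A * inducedOpNorm N B := by
  apply induced_le hd hN
  intro v hv
  rw [← Matrix.mulVec_mulVec]
  calc N (A.mulVec (B.mulVec v)) ≤ inducedOpNorm N A * N (B.mulVec v) :=
        mulVec_le_induced hd hN A _
    _ ≤ inducedOpNorm N A * (inducedOpNorm N B * N v) :=
        mul_le_mul_of_nonneg_left (mulVec_le_induced hd hN B v) (induced_nonneg hN A)
    _ = inducedOpNorm N A * inducedOpNorm N B := by rw [hv, mul_one]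

lemma induced_one_le (hd : 1 ≤ d) (hN : IsNorm N) :
    inducedOpNorm N (1 : Matrix (Fin d) (Fin d) ℂ) ≤ 1 :=
  induced_le hd hN fun v hv => by rw [Matrix.one_mulVec, hv]

lemma opNorm_le_mul_induced (hd : 1 ≤ d) (hN : IsNorm N) :
    ∃ Kc : ℝ, 0 < Kc ∧ ∀ A : Matrix (Fin d) (Fin d) ℂ,
      opNorm A ≤ Kc * inducedOpNorm N A := by
  obtain ⟨Cu, hCu, hCuB⟩ := hN.exists_upper
  obtain ⟨cl, hcl, hclB⟩ := hN.exists_lower hd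
  refine ⟨Cu / cl, div_pos hCu hcl, ?_⟩
  intro A
  have hiN : 0 ≤ inducedOpNorm N A := induced_nonneg hN A
  rw [opNorm]
  apply ContinuousLinearMap.opNorm_le_bound _ (by positivity)
  intro y
  set v : Fin d → ℂ := WithLp.equiv 2 (Fin d → ℂ) y with hv
  have hy : (WithLp.equiv 2 (Fin d → ℂ)).symm v = y :=
    (WithLp.equiv 2 (Fin d → ℂ)).symm_apply_apply y
  have h0 : ‖(Matrix.toEuclideanCLM (𝕜 := ℂ) A) y‖ = nuu (A.mulVec v) := by
    rw [← hy]; rfl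
  have h1 : cl * nuu (A.mulVec v) ≤ N (A.mulVec v) := hclB _
  have h2 : N (A.mulVec v) ≤ inducedOpNorm N A * N v := mulVec_le_induced hd hN A v
  have h3 : N v ≤ Cu * nuu v := hCuB v
  have h4 : nuu v = ‖y‖ := by rw [nuu, hy]
  have h5 : 0 ≤ ‖y‖ := norm_nonneg y
  rw [h0]
  have h6 : cl * nuu (A.mulVec v) ≤ inducedOpNorm N A * (Cu * ‖y‖) := by
    calc cl * nuu (A.mulVec v) ≤ N (A.mulVec v) := h1
      _ ≤ inducedOpNorm N A * N v := h2
      _ ≤ inducedOpNorm N A * (Cu * ‖y‖) := by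
          apply mul_le_mul_of_nonneg_left _ hiN
          rw [← h4]; exact h3
  rw [div_mul_eq_mul_div, div_mul_eq_mul_div, le_div_iff₀ hcl]
  nlinarith

lemma induced_le_mul_opNorm (hd : 1 ≤ d) (hN : IsNorm N) :
    ∃ Kc : ℝ, 0 < Kc ∧ ∀ A : Matrix (Fin d) (Fin d) ℂ,
      inducedOpNorm N A ≤ Kc * opNorm A := by
  obtain ⟨Cu, hCu, hCuB⟩ := hN.exists_upper
  obtain ⟨cl, hcl, hclB⟩ := hN.exists_lower hd
  refine ⟨Cu / cl, div_pos hCu hcl, ?_⟩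
  intro A
  apply induced_le hd hN
  intro v hv
  have h3 : nuu v ≤ 1 / cl := by
    have := hclB v
    rw [hv] at this
    rw [le_div_iff₀ hcl]; linarith
  have h4 : (0:ℝ) ≤ opNorm A := opNorm_nonneg' A
  have h5 : (0:ℝ) ≤ nuu v := nuu_nonneg v
  calc N (A.mulVec v) ≤ Cu * nuu (A.mulVec v) := hCuB _
    _ ≤ Cu * (opNorm A * nuu v) := by nlinarith [nuu_mulVec A v]
    _ ≤ Cu / cl * opNorm A := by
        have h7 : Cu * (opNorm A * nuu v) ≤ Cu * (opNorm A * (1/cl)) :=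
          mul_le_mul_of_nonneg_left (mul_le_mul_of_nonneg_left h3 h4) hCu.le
        have h8 : Cu * (opNorm A * (1/cl)) = Cu / cl * opNorm A := by
          field_simp
        linarith

section Main

variable {I : Type*} [Nonempty I] (S : I → Matrix (Fin d) (Fin d) ℂ)

/-- joint spectral radius -/
noncomputable def rho : ℝ :=
  Filter.limsup
    (fun n : ℕ => ⨆ x : ℕ → I, opNorm (prodS S x n) ^ (1 / (n : ℝ)))
    Filter.atTop

def extendW (i : I) (x : ℕ → I) : ℕ → I
  | 0 => i
  | k + 1 => x k

lemma prodS_shift (i : I) (x : ℕ → I) :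
    ∀ n, prodS S (extendW i x) (n + 1) = prodS S x n * S i := by
  intro n
  induction n with
  | zero =>
      show S (extendW i x 0) * prodS S (extendW i x) 0 = prodS S x 0 * S i
      rw [show extendW i x 0 = i from rfl,
        show prodS S (extendW i x) 0 = 1 from rfl,
        show prodS S x 0 = 1 from rfl, mul_one, one_mul]
  | succ n ih =>
      have h1 : prodS S (extendW i x) (n + 2)
          = S (extendW i x (n + 1)) * prodS S (extendW i x) (n + 1) := rfl
      rw [h1, ih, show extendW i x (n + 1) = x n from rfl,
        show prodS S x (n+1) = S (x n) * prodS S x n from rfl, mul_assoc]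

lemma prodS_opNorm_le (hd : 1 ≤ d) {C : ℝ} (hC : ∀ i, opNorm (S i) ≤ C) (x : ℕ → I) :
    ∀ n, opNorm (prodS S x n) ≤ C ^ n := by
  have hC0 : 0 ≤ C := le_trans (opNorm_nonneg' _) (hC (Classical.arbitrary I))
  intro n
  induction n with
  | zero => rw [show prodS S x 0 = 1 from rfl, opNorm_one' hd, pow_zero]
  | succ n ih =>
      rw [show prodS S x (n+1) = S (x n) * prodS S x n from rfl, pow_succ, mul_comm (C^n) C]
      exact le_trans (opNorm_mul_le' _ _)
        (mul_le_mul (hC _) ih (opNorm_nonneg' _) hC0)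

lemma term_le (hd : 1 ≤ d) {C : ℝ} (hC : ∀ i, opNorm (S i) ≤ C) (x : ℕ → I) (n : ℕ) :
    opNorm (prodS S x n) ^ (1 / (n : ℝ)) ≤ max 1 C := by
  have hC0 : 0 ≤ C := le_trans (opNorm_nonneg' _) (hC (Classical.arbitrary I))
  rcases Nat.eq_zero_or_pos n with h0 | h1
  · subst h0
    simp
  · have hn0 : (n : ℝ) ≠ 0 := Nat.cast_ne_zero.mpr h1.ne'
    have hb : opNorm (prodS S x n) ≤ (max 1 C) ^ n :=
      le_trans (prodS_opNorm_le S hd hC x n)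
        (pow_le_pow_left₀ hC0 (le_max_right 1 C) n)
    calc opNorm (prodS S x n) ^ (1 / (n : ℝ))
        ≤ ((max 1 C) ^ n) ^ (1 / (n : ℝ)) :=
          Real.rpow_le_rpow (opNorm_nonneg' _) hb (by positivity)
      _ = max 1 C := by
          rw [← Real.rpow_natCast (max 1 C) n, ← Real.rpow_mul (by positivity),
            mul_one_div_cancel hn0, Real.rpow_one]

lemma u_bddAbove (hd : 1 ≤ d) {C : ℝ} (hC : ∀ i, opNorm (S i) ≤ C) (n : ℕ) :
    BddAbove (Set.range fun x : ℕ → I => opNorm (prodS S x n) ^ (1 / (n : ℝ))) := by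
  refine ⟨max 1 C, ?_⟩
  rintro r ⟨x, rfl⟩
  exact term_le S hd hC x n

lemma u_le_max (hd : 1 ≤ d) {C : ℝ} (hC : ∀ i, opNorm (S i) ≤ C) (n : ℕ) :
    (⨆ x : ℕ → I, opNorm (prodS S x n) ^ (1 / (n : ℝ))) ≤ max 1 C :=
  ciSup_le fun x => term_le S hd hC x n

lemma u_nonneg (n : ℕ) :
    0 ≤ ⨆ x : ℕ → I, opNorm (prodS S x n) ^ (1 / (n : ℝ)) :=
  Real.iSup_nonneg fun x => Real.rpow_nonneg (opNorm_nonneg' _) _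

lemma u_isBounded (hd : 1 ≤ d) {C : ℝ} (hC : ∀ i, opNorm (S i) ≤ C) :
    Filter.IsBoundedUnder (· ≤ ·) Filter.atTop
      (fun n : ℕ => ⨆ x : ℕ → I, opNorm (prodS S x n) ^ (1 / (n : ℝ))) :=
  Filter.isBoundedUnder_of ⟨max 1 C, fun n => u_le_max S hd hC n⟩

lemma rho_nonneg (hd : 1 ≤ d) {C : ℝ} (hC : ∀ i, opNorm (S i) ≤ C) :
    0 ≤ rho S :=
  Filter.le_limsup_of_frequently_le
    (Filter.Frequently.of_forall fun n => u_nonneg S n) (u_isBounded S hd hC)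

lemma key_bound (hd : 1 ≤ d) {C : ℝ} (hC : ∀ i, opNorm (S i) ≤ C) {ε : ℝ} (hε : 0 < ε) :
    ∃ K : ℝ, 1 ≤ K ∧ ∀ n (x : ℕ → I), opNorm (prodS S x n) ≤ K * (rho S + ε) ^ n := by
  have hC0 : 0 ≤ C := le_trans (opNorm_nonneg' _) (hC (Classical.arbitrary I))
  set r := rho S + ε with hr
  have hr0 : 0 < r := add_pos_of_nonneg_of_pos (rho_nonneg S hd hC) hε
  have hlt : rho S < r := by rw [hr]; linarith
  have hev : ∀ᶠ n in Filter.atTop,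
      (⨆ x : ℕ → I, opNorm (prodS S x n) ^ (1 / (n : ℝ))) < r :=
    Filter.eventually_lt_of_limsup_lt hlt (u_isBounded S hd hC)
  obtain ⟨n0, hn0⟩ := Filter.eventually_atTop.1 hev
  set m := max n0 1 with hm
  have hbig : ∀ n, m ≤ n → ∀ x : ℕ → I, opNorm (prodS S x n) ≤ r ^ n := by
    intro n hn x
    have hn1 : 1 ≤ n := le_trans (le_max_right n0 1) hn
    have hnn0 : (n : ℝ) ≠ 0 := Nat.cast_ne_zero.mpr (by omega)
    set a := opNorm (prodS S x n) with ha
    have ha0 : 0 ≤ a := opNorm_nonneg' _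
    have h1 : a ^ (1 / (n : ℝ)) ≤ r := by
      have h2 : a ^ (1 / (n : ℝ)) ≤ ⨆ x : ℕ → I, opNorm (prodS S x n) ^ (1 / (n : ℝ)) :=
        le_ciSup (u_bddAbove S hd hC n) x
      exact le_trans h2 (hn0 n (le_trans (le_max_left n0 1) hn)).le
    have h3 : a = (a ^ (1 / (n : ℝ))) ^ n := by
      rw [← Real.rpow_natCast (a ^ (1 / (n : ℝ))) n, ← Real.rpow_mul ha0,
        one_div_mul_cancel hnn0, Real.rpow_one]
    rw [h3]
    exact pow_le_pow_left₀ (Real.rpow_nonneg ha0 _) h1 n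
  set D := max C r with hD
  have hD1 : 1 ≤ D / r := (one_le_div hr0).mpr (le_max_right C r)
  refine ⟨(D / r) ^ m, one_le_pow₀ hD1, ?_⟩
  intro n x
  have hrn : (0:ℝ) ≤ r ^ n := (pow_pos hr0 n).le
  rcases le_or_gt m n with h | h
  · exact le_trans (hbig n h x)
      (le_mul_of_one_le_left hrn (one_le_pow₀ hD1))
  · have h1 : opNorm (prodS S x n) ≤ D ^ n :=
      le_trans (prodS_opNorm_le S hd hC x n)
        (pow_le_pow_left₀ hC0 (le_max_left C r) n)
    have h2 : D ^ n = (D / r) ^ n * r ^ n := by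
      rw [← mul_pow, div_mul_cancel₀ _ hr0.ne']
    have h3 : (D / r) ^ n ≤ (D / r) ^ m :=
      pow_le_pow_right₀ (le_trans le_rfl hD1) h.le
    calc opNorm (prodS S x n) ≤ (D / r) ^ n * r ^ n := by rw [← h2]; exact h1
      _ ≤ (D / r) ^ m * r ^ n := mul_le_mul_of_nonneg_right h3 hrn

end Main

section Main2

variable {I : Type*} [Nonempty I] (S : I → Matrix (Fin d) (Fin d) ℂ)

set_option maxHeartbeats 1000000 in
lemma exists_good_norm (hd : 1 ≤ d) {C : ℝ} (hC : ∀ i, opNorm (S i) ≤ C)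
    {ε : ℝ} (hε : 0 < ε) :
    ∃ N : (Fin d → ℂ) → ℝ, IsNorm N ∧ ∀ i : I, inducedOpNorm N (S i) ≤ rho S + ε := by
  obtain ⟨K, hK1, hKB⟩ := key_bound S hd hC hε
  set r := rho S + ε with hrdef
  have hr0 : 0 < r := add_pos_of_nonneg_of_pos (rho_nonneg S hd hC) hε
  set F : (Fin d → ℂ) → (ℕ × (ℕ → I)) → ℝ :=
    fun v p => nuu ((prodS S p.2 p.1).mulVec v) / r ^ p.1 with hF
  set N : (Fin d → ℂ) → ℝ := fun v => sSup (Set.range (F v)) with hNdef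
  have hne : ∀ v, (Set.range (F v)).Nonempty := fun v => Set.range_nonempty _
  have hbdd : ∀ v, BddAbove (Set.range (F v)) := by
    intro v
    refine ⟨K * nuu v, ?_⟩
    rintro t ⟨⟨n, x⟩, rfl⟩
    have h1 : nuu ((prodS S x n).mulVec v) ≤ K * r ^ n * nuu v := by
      calc nuu ((prodS S x n).mulVec v) ≤ opNorm (prodS S x n) * nuu v := nuu_mulVec _ _
        _ ≤ K * r ^ n * nuu v :=
          mul_le_mul_of_nonneg_right (hKB n x) (nuu_nonneg v)
    rw [hF]
    simp only
    rw [div_le_iff₀ (pow_pos hr0 n)]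
    calc nuu ((prodS S x n).mulVec v) ≤ K * r ^ n * nuu v := h1
      _ = K * nuu v * r ^ n := by ring
  have hmem : ∀ v, nuu v ∈ Set.range (F v) := by
    intro v
    refine ⟨(0, Classical.arbitrary (ℕ → I)), ?_⟩
    rw [hF]
    simp only
    rw [show prodS S (Classical.arbitrary (ℕ → I)) 0 = 1 from rfl, Matrix.one_mulVec,
      pow_zero, div_one]
  have hge : ∀ v, nuu v ≤ N v := fun v => le_csSup (hbdd v) (hmem v)
  have hFle : ∀ v p, F v p ≤ N v := fun v p => le_csSup (hbdd v) ⟨p, rfl⟩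
  have hN0 : ∀ v, 0 ≤ N v := fun v => le_trans (nuu_nonneg v) (hge v)
  have hNzero : N 0 = 0 := by
    apply le_antisymm
    · apply csSup_le (hne 0)
      rintro t ⟨⟨n, x⟩, rfl⟩
      rw [hF]
      simp only
      rw [Matrix.mulVec_zero, show nuu (0 : Fin d → ℂ) = 0 from by simp [nuu], zero_div]
    · exact hN0 0
  have hsmul_le : ∀ (c : ℂ) v, N (c • v) ≤ ‖c‖ * N v := by
    intro c v
    apply csSup_le (hne _)
    rintro t ⟨⟨n, x⟩, rfl⟩
    rw [hF]
    simp only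
    rw [Matrix.mulVec_smul, nuu_smul, mul_div_assoc]
    exact mul_le_mul_of_nonneg_left (hFle v (n, x)) (norm_nonneg c)
  have hsmul : ∀ (c : ℂ) v, N (c • v) = ‖c‖ * N v := by
    intro c v
    rcases eq_or_ne c 0 with rfl | hc
    · rw [zero_smul, hNzero, norm_zero, zero_mul]
    · apply le_antisymm (hsmul_le c v)
      have h2 : N v ≤ ‖c⁻¹‖ * N (c • v) := by
        have := hsmul_le c⁻¹ (c • v)
        rwa [smul_smul, inv_mul_cancel₀ hc, one_smul] at this
      have h3 : ‖c⁻¹‖ = ‖c‖⁻¹ := norm_inv c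
      have hcn : (0:ℝ) < ‖c‖ := norm_pos_iff.mpr hc
      rw [h3] at h2
      calc ‖c‖ * N v ≤ ‖c‖ * (‖c‖⁻¹ * N (c • v)) :=
            mul_le_mul_of_nonneg_left h2 hcn.le
        _ = N (c • v) := by
            rw [← mul_assoc, mul_inv_cancel₀ hcn.ne', one_mul]
  have hadd : ∀ v w, N (v + w) ≤ N v + N w := by
    intro v w
    apply csSup_le (hne _)
    rintro t ⟨⟨n, x⟩, rfl⟩
    rw [hF]
    simp only
    rw [Matrix.mulVec_add]
    calc nuu ((prodS S x n).mulVec v + (prodS S x n).mulVec w) / r ^ n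
        ≤ (nuu ((prodS S x n).mulVec v) + nuu ((prodS S x n).mulVec w)) / r ^ n :=
          (div_le_div_iff_of_pos_right (pow_pos hr0 n)).mpr (nuu_add _ _)
      _ = nuu ((prodS S x n).mulVec v) / r ^ n + nuu ((prodS S x n).mulVec w) / r ^ n :=
          add_div _ _ _
      _ ≤ N v + N w := add_le_add (hFle v (n, x)) (hFle w (n, x))
  have hdef : ∀ v, N v = 0 ↔ v = 0 := by
    intro v
    constructor
    · intro h
      have := hge v
      rw [h] at this
      have h2 := nuu_nonneg v
      have : nuu v = 0 := le_antisymm this h2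
      exact (nuu_eq_zero v).1 this
    · rintro rfl; exact hNzero
  have hIsNorm : IsNorm N := ⟨hN0, hdef, hsmul, hadd⟩
  have hshift : ∀ (i : I) v, N ((S i).mulVec v) ≤ r * N v := by
    intro i v
    apply csSup_le (hne _)
    rintro t ⟨⟨n, x⟩, rfl⟩
    rw [hF]
    simp only
    rw [Matrix.mulVec_mulVec, ← prodS_shift S i x n]
    have h1 : F v (n + 1, extendW i x) ≤ N v :=
      hFle v (n + 1, extendW i x)
    rw [hF] at h1
    simp only at h1
    have h2 : nuu ((prodS S (extendW i x) (n+1)).mulVec v) / r ^ n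
        = r * (nuu ((prodS S (extendW i x) (n+1)).mulVec v) / r ^ (n+1)) := by
      rw [pow_succ]
      field_simp
    rw [h2]
    exact mul_le_mul_of_nonneg_left h1 hr0.le
  refine ⟨N, hIsNorm, fun i => ?_⟩
  apply induced_le hd hIsNorm
  intro v hv
  calc N ((S i).mulVec v) ≤ r * N v := hshift i v
    _ = r := by rw [hv, mul_one]

end Main2

lemma rho_le_sup {I : Type*} [Nonempty I] (S : I → Matrix (Fin d) (Fin d) ℂ)
    (hd : 1 ≤ d) {C : ℝ} (hC : ∀ i, opNorm (S i) ≤ C)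
    {N : (Fin d → ℂ) → ℝ} (hN : IsNorm N) :
    rho S ≤ ⨆ i : I, inducedOpNorm N (S i) := by
  obtain ⟨Kc, hKc, hKcB⟩ := opNorm_le_mul_induced hd hN
  obtain ⟨Kc', hKc', hKcB'⟩ := induced_le_mul_opNorm hd hN
  have hC0 : 0 ≤ C := le_trans (opNorm_nonneg' _) (hC (Classical.arbitrary I))
  set M := ⨆ i : I, inducedOpNorm N (S i) with hM
  have hM0 : 0 ≤ M := Real.iSup_nonneg fun i => induced_nonneg hN _
  have hMi : ∀ i, inducedOpNorm N (S i) ≤ M := by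
    intro i
    apply le_ciSup (f := fun i : I => inducedOpNorm N (S i))
    refine ⟨Kc' * C, ?_⟩
    rintro t ⟨j, rfl⟩
    exact le_trans (hKcB' (S j)) (mul_le_mul_of_nonneg_left (hC j) hKc'.le)
  have hprod : ∀ (x : ℕ → I) n, inducedOpNorm N (prodS S x n) ≤ M ^ n := by
    intro x n
    induction n with
    | zero =>
        rw [show prodS S x 0 = 1 from rfl, pow_zero]
        exact induced_one_le hd hN
    | succ n ih =>
        rw [show prodS S x (n+1) = S (x n) * prodS S x n from rfl, pow_succ,
          mul_comm (M ^ n) M]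
        exact le_trans (induced_mul_le hd hN _ _)
          (mul_le_mul (hMi _) ih (induced_nonneg hN _) hM0)
  set K2 := max 1 Kc with hK2def
  have hK2 : (1:ℝ) ≤ K2 := le_max_left 1 Kc
  have hK20 : (0:ℝ) < K2 := lt_of_lt_of_le one_pos hK2
  have hun : ∀ n, 1 ≤ n →
      (⨆ x : ℕ → I, opNorm (prodS S x n) ^ (1 / (n : ℝ))) ≤ K2 ^ (1 / (n : ℝ)) * M := by
    intro n hn
    have hnn0 : (n : ℝ) ≠ 0 := Nat.cast_ne_zero.mpr (by omega)
    apply ciSup_le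
    intro x
    have h1 : opNorm (prodS S x n) ≤ K2 * M ^ n := by
      calc opNorm (prodS S x n) ≤ Kc * inducedOpNorm N (prodS S x n) := hKcB _
        _ ≤ Kc * M ^ n := mul_le_mul_of_nonneg_left (hprod x n) hKc.le
        _ ≤ K2 * M ^ n := mul_le_mul_of_nonneg_right (le_max_right 1 Kc) (pow_nonneg hM0 n)
    calc opNorm (prodS S x n) ^ (1 / (n : ℝ))
        ≤ (K2 * M ^ n) ^ (1 / (n : ℝ)) :=
          Real.rpow_le_rpow (opNorm_nonneg' _) h1 (by positivity)
      _ = K2 ^ (1 / (n : ℝ)) * M := by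
          rw [Real.mul_rpow hK20.le (pow_nonneg hM0 n), ← Real.rpow_natCast M n,
            ← Real.rpow_mul hM0, mul_one_div_cancel hnn0, Real.rpow_one]
  have htend : Filter.Tendsto (fun n : ℕ => K2 ^ (1 / (n : ℝ)) * M) Filter.atTop (𝓝 M) := by
    have h1 : Filter.Tendsto (fun n : ℕ => K2 ^ (1 / (n : ℝ))) Filter.atTop (𝓝 1) := by
      have heq : ∀ n : ℕ, K2 ^ (1 / (n : ℝ)) = Real.exp (Real.log K2 * (1 / (n : ℝ))) :=
        fun n => Real.rpow_def_of_pos hK20 _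
      simp only [heq]
      have h2 : Filter.Tendsto (fun n : ℕ => Real.log K2 * (1 / (n : ℝ)))
          Filter.atTop (𝓝 0) := by
        have := tendsto_one_div_atTop_nhds_zero_nat.const_mul (Real.log K2)
        simpa using this
      have h3 := (Real.continuous_exp.tendsto 0).comp h2
      simpa [Function.comp_def] using h3
    have := h1.mul_const M
    simpa using this
  calc rho S
      ≤ Filter.limsup (fun n : ℕ => K2 ^ (1 / (n : ℝ)) * M) Filter.atTop := by
        apply Filter.limsup_le_limsup
        · filter_upwards [Filter.eventually_ge_atTop 1] with n hn
          exact hun n hn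
        · exact (Filter.isBoundedUnder_of
            ⟨0, fun n => u_nonneg S n⟩ :
              Filter.IsBoundedUnder (· ≥ ·) Filter.atTop _).isCoboundedUnder_le
        · exact htend.isBoundedUnder_le
    _ = M := htend.limsup_eq


/-- **Rota–Strang / pre-extremal norms.** For a bounded family of matrices and any
`ε > 0`, there is a vector norm on `ℂ^d` whose induced operator norm bounds every `S i`
by `ρ̂(S) + ε`; consequently `ρ̂(S)` is the infimum over all vector norms of
`sup_i N_op(S i)`. -/
theorem exists_preextremal_norm {d : ℕ} (hd : 1 ≤ d) {I : Type*} [Nonempty I]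
    (S : I → Matrix (Fin d) (Fin d) ℂ)
    (hbdd : ∃ C : ℝ, ∀ i : I, opNorm (S i) ≤ C) :
    (∀ ε : ℝ, 0 < ε →
      ∃ N : (Fin d → ℂ) → ℝ, IsNorm N ∧ ∀ i : I,
        inducedOpNorm N (S i) ≤
          Filter.limsup
            (fun n : ℕ => ⨆ x : ℕ → I, opNorm (prodS S x n) ^ (1 / (n : ℝ)))
            Filter.atTop + ε) ∧
      Filter.limsup
          (fun n : ℕ => ⨆ x : ℕ → I, opNorm (prodS S x n) ^ (1 / (n : ℝ)))
          Filter.atTop =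
        ⨅ N : {N : (Fin d → ℂ) → ℝ // IsNorm N}, ⨆ i : I, inducedOpNorm N.1 (S i) := by
  obtain ⟨C, hC⟩ := hbdd
  have hrho : Filter.limsup
      (fun n : ℕ => ⨆ x : ℕ → I, opNorm (prodS S x n) ^ (1 / (n : ℝ)))
      Filter.atTop = rho S := rfl
  constructor
  · intro ε hε
    obtain ⟨N, hN, hNb⟩ := exists_good_norm S hd hC hε
    exact ⟨N, hN, fun i => by rw [hrho]; exact hNb i⟩
  · rw [hrho]
    haveI : Nonempty {N : (Fin d → ℂ) → ℝ // IsNorm N} := by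
      obtain ⟨N, hN, -⟩ := exists_good_norm S hd hC one_pos
      exact ⟨⟨N, hN⟩⟩
    apply le_antisymm
    · apply le_ciInf
      rintro ⟨N, hN⟩
      exact rho_le_sup S hd hC hN
    · apply le_of_forall_pos_le_add
      intro ε hε
      obtain ⟨N, hN, hNb⟩ := exists_good_norm S hd hC hε
      calc (⨅ N : {N : (Fin d → ℂ) → ℝ // IsNorm N}, ⨆ i : I, inducedOpNorm N.1 (S i))
          ≤ ⨆ i : I, inducedOpNorm N (S i) := by
            apply ciInf_le _ (⟨N, hN⟩ : {N : (Fin d → ℂ) → ℝ // IsNorm N})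
            refine ⟨0, ?_⟩
            rintro t ⟨M, rfl⟩
            exact Real.iSup_nonneg fun i => induced_nonneg M.2 _
        _ ≤ rho S + ε := ciSup_le hNb
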